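/- Assume each φᵢ is twice continuously differentiable. Let V(ξ) = Σ_{i=1}^{n−1} kᵢ φᵢ(ξ)². Let r > 0 be such that P is nonempty and contained in the open ball {x : ‖x‖ < r}, and let α > 0 satisfy α < V(p) for every p with ‖p‖ = r; set Ω_α = {ξ : ‖ξ‖ < r and V(ξ) ≤ α}. Assume either C = ∅ or inf{‖c − p‖ : c ∈ C, p ∈ P} > 0. Then every differentiable ξ : [0,∞) → ℝⁿ with ξ′(t) = χ(ξ(t)) for all t ≥ 0 and ξ(0) ∈ Ω_α satisfies the dichotomy: either dist(ξ(t), P) → 0 as t → ∞, or C ≠ ∅ and dist(ξ(t), C) → 0 as t → ∞. -/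

import Mathlib

open scoped RealInnerProductSpace

open Set

private lemma sum_dite_fin' (n : ℕ) (f : (j : ℕ) → j < n - 1 → ℝ) :
    ∑ j : Fin n, (if h : (j : ℕ) < n - 1 then f j h else 0) = ∑ i : Fin (n - 1), f i i.2 := by
  rw [Fin.sum_univ_eq_sum_range (fun j => if h : j < n - 1 then f j h else 0) n]
  have h2 : ∑ i : Fin (n-1), f i i.2
      = ∑ j ∈ Finset.range (n-1), (if h : j < n - 1 then f j h else 0) := by
    rw [Finset.sum_range fun j => if h : j < n - 1 then f j h else 0]
    exact Finset.sum_congr rfl fun i _ => by rw [dif_pos i.2]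
  rw [h2, Finset.sum_subset (Finset.range_subset_range.2 (Nat.sub_le n 1))]
  intro x hx hnx
  rw [Finset.mem_range] at hnx
  rw [dif_neg hnx]

theorem stmt6 (n : ℕ) (hn : 2 ≤ n)
    (k : Fin (n - 1) → ℝ) (hk : ∀ i, 0 < k i)
    (φ : Fin (n - 1) → EuclideanSpace ℝ (Fin n) → ℝ)
    (hφ : ∀ i, ContDiff ℝ 2 (φ i))
    (bot : EuclideanSpace ℝ (Fin n) → EuclideanSpace ℝ (Fin n))
    (hbot : ∀ ξ u : EuclideanSpace ℝ (Fin n),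
      ⟪bot ξ, u⟫ = Matrix.det (Matrix.of (fun (i j : Fin n) =>
        if h : (j : ℕ) < n - 1 then gradient (φ ⟨j, h⟩) ξ i else u i)))
    (χ : EuclideanSpace ℝ (Fin n) → EuclideanSpace ℝ (Fin n))
    (hχ : ∀ ξ, χ ξ = bot ξ - ∑ i, (k i * φ i ξ) • gradient (φ i) ξ)
    (P C : Set (EuclideanSpace ℝ (Fin n)))
    (hP : P = {ξ | ∀ i, φ i ξ = 0})
    (hC : C = {ξ | χ ξ = 0})
    (V : EuclideanSpace ℝ (Fin n) → ℝ)
    (hV : ∀ ξ, V ξ = ∑ i, k i * φ i ξ ^ 2)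
    (r : ℝ) (hr : 0 < r) (hPne : P.Nonempty)
    (hPr : P ⊆ Metric.ball (0 : EuclideanSpace ℝ (Fin n)) r)
    (α : ℝ) (hα : 0 < α)
    (hαr : ∀ p : EuclideanSpace ℝ (Fin n), ‖p‖ = r → α < V p)
    (hCP : C = ∅ ∨ ∃ d > (0 : ℝ), ∀ c ∈ C, ∀ p ∈ P, d ≤ ‖c - p‖)
    (ξ : ℝ → EuclideanSpace ℝ (Fin n))
    (hξ : ∀ t : ℝ, 0 ≤ t → HasDerivAt ξ (χ (ξ t)) t)
    (hξ0 : ‖ξ 0‖ < r ∧ V (ξ 0) ≤ α) :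
    Filter.Tendsto (fun t => Metric.infDist (ξ t) P) Filter.atTop (nhds 0) ∨
      (C.Nonempty ∧ Filter.Tendsto (fun t => Metric.infDist (ξ t) C) Filter.atTop (nhds 0)) := by
  have hn1 : n - 1 < n := by omega
  set w : EuclideanSpace ℝ (Fin n) → EuclideanSpace ℝ (Fin n) :=
    fun x => ∑ i, (k i * φ i x) • gradient (φ i) x with hw
  -- basic differentiability / continuity
  have hdiff : ∀ i, Differentiable ℝ (φ i) := fun i => (hφ i).differentiable (by norm_num)
  have hφc : ∀ i, Continuous (φ i) := fun i => (hdiff i).continuous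
  have hgc : ∀ i, Continuous (gradient (φ i)) := by
    intro i
    have h1 : Continuous (fun x => fderiv ℝ (φ i) x) := (hφ i).continuous_fderiv (by norm_num)
    exact ((InnerProductSpace.toDual ℝ _).symm.continuous.comp h1 : _)
  have hwc : Continuous w := by
    apply continuous_finset_sum
    intro i _
    exact (continuous_const.mul (hφc i)).smul (hgc i)
  have hVc : Continuous V := by
    have hVf : V = fun x => ∑ i, k i * φ i x ^ 2 := funext hV
    rw [hVf]
    exact continuous_finset_sum _ fun i _ => continuous_const.mul ((hφc i).pow 2)
  have hVnonneg : ∀ x, 0 ≤ V x := by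
    intro x
    rw [hV]
    exact Finset.sum_nonneg fun i _ => mul_nonneg (hk i).le (sq_nonneg _)
  have hVzero : ∀ x, V x = 0 → ∀ i, φ i x = 0 := by
    intro x hx i
    have h0 : ∀ j ∈ Finset.univ, (0:ℝ) ≤ k j * φ j x ^ 2 :=
      fun j _ => mul_nonneg (hk j).le (sq_nonneg _)
    have h1 := (Finset.sum_eq_zero_iff_of_nonneg h0).1 ((hV x) ▸ hx) i (Finset.mem_univ i)
    have h2 : φ i x ^ 2 = 0 := by
      rcases mul_eq_zero.1 h1 with h | h
      · exact absurd h (ne_of_gt (hk i))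
      · exact h
    exact (pow_eq_zero_iff two_ne_zero).mp h2
  -- wedge product lemmas
  have hdup : ∀ (x : EuclideanSpace ℝ (Fin n)) (i : Fin (n-1)),
      ⟪bot x, gradient (φ i) x⟫ = 0 := by
    intro x i
    rw [hbot, ← Matrix.det_transpose]
    apply Matrix.det_zero_of_row_eq (i := (⟨(i:ℕ), lt_trans i.2 hn1⟩ : Fin n))
      (j := (⟨n-1, hn1⟩ : Fin n))
    · intro h
      have := congrArg Fin.val h
      simp only [] at this
      omega
    · funext row
      simp only [Matrix.transpose_apply, Matrix.of_apply]
      rw [dif_pos i.2, dif_neg (lt_irrefl _)]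
  have hwzero : ∀ (x : EuclideanSpace ℝ (Fin n)),
      w x = 0 → (∃ i, φ i x ≠ 0) → bot x = 0 := by
    intro x hwx ⟨i0, hi0⟩
    simp only [hw] at hwx
    have key : ∀ u : EuclideanSpace ℝ (Fin n), ⟪bot x, u⟫ = 0 := by
      intro u
      rw [hbot, ← Matrix.exists_mulVec_eq_zero_iff]
      refine ⟨fun j => if h : (j:ℕ) < n - 1 then k ⟨j,h⟩ * φ ⟨j,h⟩ x else 0, ?_, ?_⟩
      · intro hv
        have hvi := congrFun hv (⟨(i0:ℕ), lt_trans i0.2 hn1⟩ : Fin n)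
        rw [dif_pos i0.2] at hvi
        simp only [Pi.zero_apply, Fin.eta] at hvi
        exact mul_ne_zero (ne_of_gt (hk i0)) hi0 hvi
      · funext row
        simp only [Matrix.mulVec, dotProduct, Matrix.of_apply, Pi.zero_apply]
        have heq : ∀ j : Fin n, (if h : (j : ℕ) < n - 1 then gradient (φ ⟨j, h⟩) x row else u row) *
            (if h : (j:ℕ) < n - 1 then k ⟨j,h⟩ * φ ⟨j,h⟩ x else 0)
            = if h : (j:ℕ) < n - 1 then (k ⟨j,h⟩ * φ ⟨j,h⟩ x) * gradient (φ ⟨j,h⟩) x row else 0 := by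
          intro j
          by_cases h : (j:ℕ) < n - 1
          · rw [dif_pos h, dif_pos h, dif_pos h, mul_comm]
          · rw [dif_neg h, dif_neg h, dif_neg h, mul_zero]
        rw [Finset.sum_congr rfl fun j _ => heq j,
          sum_dite_fin' n (fun j h => (k ⟨j,h⟩ * φ ⟨j,h⟩ x) * gradient (φ ⟨j,h⟩) x row)]
        have hwr : ∑ i, ((k i * φ i x) • gradient (φ i) x) row = 0 := by
          have := congrArg (fun v : EuclideanSpace ℝ (Fin n) => v row) hwx
          simpa using this
        simpa [Fin.eta] using hwr
    exact inner_self_eq_zero.mp (key (bot x))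
  have hchi' : ∀ x, χ x = bot x - w x := fun x => hχ x
  have hwbot : ∀ x, ⟪w x, bot x⟫ = 0 := by
    intro x
    simp only [hw]
    rw [sum_inner]
    apply Finset.sum_eq_zero
    intro i _
    rw [real_inner_smul_left, real_inner_comm, hdup x i, mul_zero]
  have hwchi : ∀ x, ⟪w x, χ x⟫ = -‖w x‖^2 := by
    intro x
    rw [hchi' x, inner_sub_right, hwbot, real_inner_self_eq_norm_sq]
    ring
  have hsing : ∀ x, w x = 0 → V x ≠ 0 → χ x = 0 := by
    intro x hwx hVx
    have hex : ∃ i, φ i x ≠ 0 := by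
      by_contra h
      push_neg at h
      exact hVx (by rw [hV]; exact Finset.sum_eq_zero fun i _ => by rw [h i]; ring)
    rw [hchi' x, hwzero x hwx hex, hwx, sub_zero]
  -- derivative of g
  set g : ℝ → ℝ := fun t => V (ξ t) with hg
  have hgderiv : ∀ t, 0 ≤ t → HasDerivAt g (-(2 * ‖w (ξ t)‖^2)) t := by
    intro t ht
    have hchain : ∀ i : Fin (n-1), HasDerivAt (fun s => φ i (ξ s))
        (⟪gradient (φ i) (ξ t), χ (ξ t)⟫) t := by
      intro i
      have := (hdiff i (ξ t)).hasGradientAt.hasFDerivAt.comp_hasDerivAt t (hξ t ht)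
      exact this.congr_deriv (by simp [InnerProductSpace.toDual_apply_apply])
    have hsum : HasDerivAt (fun s => ∑ i, k i * φ i (ξ s) ^ 2)
        (∑ i, k i * (2 * φ i (ξ t) * ⟪gradient (φ i) (ξ t), χ (ξ t)⟫)) t := by
      apply HasDerivAt.fun_sum
      intro i _
      have h2 : HasDerivAt (fun s => φ i (ξ s) ^ 2)
          (2 * φ i (ξ t) * ⟪gradient (φ i) (ξ t), χ (ξ t)⟫) t := by
        have h3 := (hchain i).pow 2
        exact h3.congr_deriv (by simp)
      simpa using h2.const_mul (k i)
    have hval : ∑ i, k i * (2 * φ i (ξ t) * ⟪gradient (φ i) (ξ t), χ (ξ t)⟫)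
        = -(2 * ‖w (ξ t)‖^2) := by
      have h4 : ∑ i, k i * (2 * φ i (ξ t) * ⟪gradient (φ i) (ξ t), χ (ξ t)⟫)
          = 2 * ⟪w (ξ t), χ (ξ t)⟫ := by
        simp only [hw]
        rw [sum_inner, Finset.mul_sum]
        apply Finset.sum_congr rfl
        intro i _
        rw [real_inner_smul_left]
        ring
      rw [h4, hwchi]
      ring
    have hfun : (fun s => ∑ i, k i * φ i (ξ s) ^ 2) = g := funext fun s => (hV (ξ s)).symm
    rw [hval, hfun] at hsum
    exact hsum
  have hganti : AntitoneOn g (Ici 0) := by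
    apply antitoneOn_of_deriv_nonpos (convex_Ici 0)
    · exact fun t ht => (hgderiv t ht).continuousAt.continuousWithinAt
    · intro t ht
      rw [interior_Ici] at ht
      exact (hgderiv t ht.le).differentiableAt.differentiableWithinAt
    · intro t ht
      rw [interior_Ici] at ht
      rw [(hgderiv t ht.le).deriv]
      have := sq_nonneg ‖w (ξ t)‖
      linarith
  have hgα : ∀ t, 0 ≤ t → g t ≤ α := fun t ht =>
    le_trans (hganti self_mem_Ici ht ht) hξ0.2
  have hball : ∀ t, 0 ≤ t → ‖ξ t‖ < r := by
    intro t ht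
    by_contra h
    push_neg at h
    have hcont : ContinuousOn (fun s => ‖ξ s‖) (Icc 0 t) :=
      fun s hs => ((hξ s hs.1).continuousAt.norm).continuousWithinAt
    obtain ⟨s, hs, hsr⟩ := intermediate_value_Icc ht hcont ⟨hξ0.1.le, h⟩
    have h1 := hαr (ξ s) hsr
    have h2 : g s = V (ξ s) := rfl
    have h3 := hgα s hs.1
    linarith
  have hKc : ∀ t, 0 ≤ t → ξ t ∈ Metric.closedBall (0:EuclideanSpace ℝ (Fin n)) r := by
    intro t ht
    rw [Metric.mem_closedBall, dist_zero_right]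
    exact (hball t ht).le
  -- continuity of bot and χ
  have hbotc : Continuous bot := by
    have hcoord : bot = fun x => (EuclideanSpace.equiv (Fin n) ℝ).symm (fun i =>
        Matrix.det (Matrix.of (fun (i' j : Fin n) =>
          if h : (j : ℕ) < n - 1 then gradient (φ ⟨j, h⟩) x i'
          else (EuclideanSpace.single i (1:ℝ)) i'))) := by
      funext x
      ext i
      have h1 := hbot x (EuclideanSpace.single i (1:ℝ))
      have h2 : ⟪bot x, EuclideanSpace.single i (1:ℝ)⟫ = bot x i := by
        simp [EuclideanSpace.inner_single_right]
      rw [← h2, h1]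
      rfl
    rw [hcoord]
    apply (EuclideanSpace.equiv (Fin n) ℝ).symm.continuous.comp
    apply continuous_pi
    intro i
    apply Continuous.matrix_det
    apply continuous_matrix
    intro i' j
    by_cases h : (j:ℕ) < n - 1
    · simp only [Matrix.of_apply, dif_pos h]
      exact ((continuous_apply i').comp (PiLp.continuous_ofLp 2 _)).comp (hgc _)
    · simp only [Matrix.of_apply, dif_neg h]
      exact continuous_const
  have hχc : Continuous χ := by
    have hcf : χ = fun x => bot x - w x := funext hchi'
    rw [hcf]
    exact hbotc.sub hwc
  -- Lipschitz bound
  obtain ⟨xM, hxM, hmax⟩ := (isCompact_closedBall (0:EuclideanSpace ℝ (Fin n)) r).exists_isMaxOn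
    ⟨0, by simp [hr.le]⟩ (hχc.norm.continuousOn)
  set M : ℝ := max ‖χ xM‖ 1 with hM
  have hM1 : 0 < M := lt_of_lt_of_le one_pos (le_max_right _ _)
  have hMb : ∀ t, 0 ≤ t → ‖χ (ξ t)‖ ≤ M := fun t ht =>
    le_trans (hmax (hKc t ht)) (le_max_left _ _)
  have hLip : ∀ s t, 0 ≤ s → s ≤ t → ‖ξ t - ξ s‖ ≤ M * (t - s) := by
    intro s t hs hst
    have h1 := Convex.norm_image_sub_le_of_norm_hasDerivWithin_le
      (f := ξ) (f' := fun u => χ (ξ u)) (C := M) (s := Icc s t)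
      (fun u hu => (hξ u (le_trans hs hu.1)).hasDerivWithinAt)
      (fun u hu => hMb u (le_trans hs hu.1)) (convex_Icc s t) ⟨le_refl s, hst⟩ ⟨hst, le_refl t⟩
    rw [Real.norm_eq_abs, abs_of_nonneg (by linarith : (0:ℝ) ≤ t - s)] at h1
    exact h1
  -- infimum of g
  have hgne : (g '' (Ici 0)).Nonempty := ⟨g 0, mem_image_of_mem g self_mem_Ici⟩
  have hbdd : BddBelow (g '' Ici 0) := by
    refine ⟨0, fun y hy => ?_⟩
    obtain ⟨t, _, rfl⟩ := hy
    exact hVnonneg (ξ t)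
  set L := sInf (g '' Ici 0) with hL
  have hLle : ∀ t, 0 ≤ t → L ≤ g t := fun t ht => csInf_le hbdd (mem_image_of_mem g ht)
  have hL0 : 0 ≤ L := by
    apply le_csInf hgne
    intro y hy
    obtain ⟨t, _, rfl⟩ := hy
    exact hVnonneg (ξ t)
  have happrox : ∀ ε, 0 < ε → ∃ t, 0 ≤ t ∧ g t < L + ε := by
    intro ε hε
    obtain ⟨y, hy, hy2⟩ := exists_lt_of_csInf_lt hgne (lt_add_of_pos_right L hε)
    obtain ⟨t, ht, rfl⟩ := hy
    exact ⟨t, ht, hy2⟩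
  rcases eq_or_lt_of_le hL0 with hLz | hLpos
  · -- L = 0 : converge to P
    left
    rw [Metric.tendsto_atTop]
    intro ε hε
    by_cases hA : (Metric.closedBall (0:EuclideanSpace ℝ (Fin n)) r ∩
        {x | ε ≤ Metric.infDist x P}).Nonempty
    · obtain ⟨x₀, hx₀, hmin⟩ := ((isCompact_closedBall (0:EuclideanSpace ℝ (Fin n)) r).inter_right
        (isClosed_le continuous_const (Metric.continuous_infDist_pt P))).exists_isMinOn hA
        hVc.continuousOn
      have hm : 0 < V x₀ := by
        rcases (hVnonneg x₀).lt_or_eq with h | h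
        · exact h
        · exfalso
          have hx₀P : x₀ ∈ P := by rw [hP]; exact fun i => hVzero x₀ h.symm i
          have hz : Metric.infDist x₀ P = 0 := Metric.infDist_zero_of_mem hx₀P
          have h2 := hx₀.2
          rw [mem_setOf_eq, hz] at h2
          linarith
      obtain ⟨t₀, ht₀, hgt₀⟩ := happrox (V x₀) hm
      refine ⟨t₀, fun t ht => ?_⟩
      have ht0 : 0 ≤ t := le_trans ht₀ ht
      have hgt : g t < V x₀ := by
        have := hganti (mem_Ici.2 ht₀) (mem_Ici.2 ht0) ht
        rw [← hLz] at hgt₀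
        linarith
      rw [Real.dist_eq, sub_zero, abs_of_nonneg Metric.infDist_nonneg]
      by_contra hcon
      push_neg at hcon
      have hmem : ξ t ∈ Metric.closedBall (0:EuclideanSpace ℝ (Fin n)) r ∩
          {x | ε ≤ Metric.infDist x P} := ⟨hKc t ht0, hcon⟩
      have h8 : V x₀ ≤ V (ξ t) := hmin hmem
      have hgteq : g t = V (ξ t) := rfl
      linarith
    · refine ⟨0, fun t ht => ?_⟩
      rw [Real.dist_eq, sub_zero, abs_of_nonneg Metric.infDist_nonneg]
      by_contra hcon
      push_neg at hcon
      exact hA ⟨ξ t, hKc t ht, hcon⟩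
  · -- L > 0 : converge to C
    right
    have hCne : C.Nonempty := by
      by_contra hCe
      rw [Set.not_nonempty_iff_eq_empty] at hCe
      have hcomp : IsCompact (Metric.closedBall (0:EuclideanSpace ℝ (Fin n)) r ∩
          {x | L ≤ V x}) :=
        (isCompact_closedBall _ _).inter_right (isClosed_le continuous_const hVc)
      have hne : (Metric.closedBall (0:EuclideanSpace ℝ (Fin n)) r ∩ {x | L ≤ V x}).Nonempty :=
        ⟨ξ 0, hKc 0 le_rfl, hLle 0 le_rfl⟩
      obtain ⟨y₀, hy₀, hminw⟩ := hcomp.exists_isMinOn hne ((hwc.norm.pow 2).continuousOn)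
      set m := ‖w y₀‖^2 with hm
      have hmpos : 0 < m := by
        rw [hm]
        rcases (sq_nonneg ‖w y₀‖).lt_or_eq with h | h
        · exact h
        · exfalso
          have hwz : w y₀ = 0 := norm_eq_zero.mp ((pow_eq_zero_iff two_ne_zero).mp h.symm)
          have hVz : V y₀ ≠ 0 := by
            have h2 := hy₀.2
            intro h0
            rw [mem_setOf_eq, h0] at h2
            linarith
          have hyC : y₀ ∈ C := by rw [hC]; exact hsing y₀ hwz hVz
          rw [hCe] at hyC
          exact hyC
      have hD : ∀ t, 0 ≤ t → HasDerivAt (fun u => g u + 2*m*u)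
          (-(2 * ‖w (ξ t)‖^2) + 2*m) t := by
        intro t ht
        have := (hgderiv t ht).add ((hasDerivAt_id t).const_mul (2*m))
        exact this.congr_deriv (by simp)
      have hanti2 : AntitoneOn (fun u => g u + 2*m*u) (Ici 0) := by
        apply antitoneOn_of_deriv_nonpos (convex_Ici 0)
        · exact fun t ht => (hD t ht).continuousAt.continuousWithinAt
        · intro t ht
          rw [interior_Ici] at ht
          exact (hD t ht.le).differentiableAt.differentiableWithinAt
        · intro t ht
          rw [interior_Ici] at ht
          rw [(hD t ht.le).deriv]
          have hmem : ξ t ∈ Metric.closedBall (0:EuclideanSpace ℝ (Fin n)) r ∩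
              {x | L ≤ V x} := ⟨hKc t ht.le, hLle t ht.le⟩
          have h9 : m ≤ ‖w (ξ t)‖^2 := hminw hmem
          linarith
      have hkey : ∀ t, 0 ≤ t → g t + 2*m*t ≤ g 0 := by
        intro t ht
        have h9 : g t + 2*m*t ≤ g 0 + 2*m*0 := hanti2 self_mem_Ici ht ht
        linarith
      have hg0 : 0 ≤ g 0 := hVnonneg _
      have hT : (0:ℝ) ≤ (g 0 + 1)/(2*m) := by positivity
      have h5 := hkey ((g 0 + 1)/(2*m)) hT
      have h6 : 2*m*((g 0 + 1)/(2*m)) = g 0 + 1 := by field_simp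
      have h7 : 0 ≤ g ((g 0 + 1)/(2*m)) := hVnonneg _
      rw [h6] at h5
      linarith
    refine ⟨hCne, ?_⟩
    rw [Metric.tendsto_atTop]
    intro ε hε
    by_contra hcon
    push_neg at hcon
    have hfreq : ∀ N : ℝ, ∃ t, N ≤ t ∧ 0 ≤ t ∧ ε ≤ Metric.infDist (ξ t) C := by
      intro N
      obtain ⟨t, htN, hd⟩ := hcon (max N 0)
      rw [Real.dist_eq, sub_zero, abs_of_nonneg Metric.infDist_nonneg] at hd
      exact ⟨t, le_trans (le_max_left _ _) htN, le_trans (le_max_right _ _) htN, hd⟩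
    set B := Metric.closedBall (0:EuclideanSpace ℝ (Fin n)) r ∩
      {x | L ≤ V x ∧ ε/2 ≤ Metric.infDist x C} with hB
    have hBcomp : IsCompact B := (isCompact_closedBall _ _).inter_right
      ((isClosed_le continuous_const hVc).inter
        (isClosed_le continuous_const (Metric.continuous_infDist_pt C)))
    have hBne : B.Nonempty := by
      obtain ⟨t, _, ht0, hd⟩ := hfreq 0
      exact ⟨ξ t, hKc t ht0, hLle t ht0, le_trans (by linarith) hd⟩
    obtain ⟨z₀, hz₀, hminw⟩ := hBcomp.exists_isMinOn hBne ((hwc.norm.pow 2).continuousOn)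
    set m := ‖w z₀‖^2 with hm
    have hmpos : 0 < m := by
      rw [hm]
      rcases (sq_nonneg ‖w z₀‖).lt_or_eq with h | h
      · exact h
      · exfalso
        have hwz : w z₀ = 0 := norm_eq_zero.mp ((pow_eq_zero_iff two_ne_zero).mp h.symm)
        have hVz : V z₀ ≠ 0 := by
          have h2 := hz₀.2.1
          intro h0
          rw [h0] at h2
          linarith
        have hzC : z₀ ∈ C := by rw [hC]; exact hsing z₀ hwz hVz
        have h3 := hz₀.2.2
        rw [Metric.infDist_zero_of_mem hzC] at h3
        linarith
    set δ := min (ε/(2*M)) 1 with hδ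
    have hδpos : 0 < δ := lt_min (by positivity) one_pos
    have hδM : M * δ ≤ ε/2 := by
      calc M * δ ≤ M * (ε/(2*M)) := mul_le_mul_of_nonneg_left (min_le_left _ _) hM1.le
      _ = ε/2 := by field_simp
    have hstep : ∀ s, 0 ≤ s → ε ≤ Metric.infDist (ξ s) C → g (s + δ) ≤ g s - 2*m*δ := by
      intro s hs hεs
      have hBmem : ∀ t, t ∈ Icc s (s+δ) → ξ t ∈ B := by
        intro t ht
        have ht0 : 0 ≤ t := le_trans hs ht.1
        refine ⟨hKc t ht0, hLle t ht0, ?_⟩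
        have h1 : ‖ξ t - ξ s‖ ≤ M * (t - s) := hLip s t hs ht.1
        have h2 : M * (t - s) ≤ M * δ := by
          apply mul_le_mul_of_nonneg_left _ hM1.le
          linarith [ht.2]
        have h3 : Metric.infDist (ξ s) C ≤ Metric.infDist (ξ t) C + dist (ξ s) (ξ t) :=
          Metric.infDist_le_infDist_add_dist
        rw [dist_eq_norm, norm_sub_rev] at h3
        show ε/2 ≤ Metric.infDist (ξ t) C
        linarith
      have hD : ∀ t, 0 ≤ t → HasDerivAt (fun u => g u + 2*m*u)
          (-(2 * ‖w (ξ t)‖^2) + 2*m) t := by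
        intro t ht
        have := (hgderiv t ht).add ((hasDerivAt_id t).const_mul (2*m))
        exact this.congr_deriv (by simp)
      have hanti3 : AntitoneOn (fun u => g u + 2*m*u) (Icc s (s+δ)) := by
        apply antitoneOn_of_deriv_nonpos (convex_Icc s (s+δ))
        · exact fun t ht => (hD t (le_trans hs ht.1)).continuousAt.continuousWithinAt
        · intro t ht
          rw [interior_Icc] at ht
          exact (hD t (le_trans hs ht.1.le)).differentiableAt.differentiableWithinAt
        · intro t ht
          rw [interior_Icc] at ht
          rw [(hD t (le_trans hs ht.1.le)).deriv]
          have h9 : m ≤ ‖w (ξ t)‖^2 := hminw (hBmem t (Ioo_subset_Icc_self ht))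
          linarith
      have h5 : g (s+δ) + 2*m*(s+δ) ≤ g s + 2*m*s :=
        hanti3 (⟨le_refl s, by linarith⟩ : s ∈ Icc s (s+δ))
          (⟨by linarith, le_refl (s+δ)⟩ : s + δ ∈ Icc s (s+δ)) (by linarith)
      linarith
    have hiter : ∀ N : ℕ, ∃ s, 0 ≤ s ∧ g s ≤ g 0 - N * (2*m*δ) := by
      intro N
      induction N with
      | zero => exact ⟨0, le_rfl, by simp⟩
      | succ N ih =>
        obtain ⟨s, hs0, hgs⟩ := ih
        obtain ⟨s', hss', hs'0, hεs'⟩ := hfreq s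
        have hgs' : g s' ≤ g s := hganti (mem_Ici.2 hs0) (mem_Ici.2 hs'0) hss'
        have h6 := hstep s' hs'0 hεs'
        refine ⟨s' + δ, by linarith, ?_⟩
        push_cast
        push_cast at hgs
        linarith
    obtain ⟨Nn, hNn⟩ := exists_nat_gt (g 0 / (2*m*δ))
    obtain ⟨s, hs0, hgs⟩ := hiter Nn
    have hpos : (0:ℝ) < 2*m*δ := by positivity
    have h1 : g 0 / (2*m*δ) * (2*m*δ) < Nn * (2*m*δ) := mul_lt_mul_of_pos_right hNn hpos
    rw [div_mul_cancel₀ _ (ne_of_gt hpos)] at h1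
    have h2 : 0 ≤ g s := hVnonneg _
    linarith
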